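/- Let P₄ be the path with vertices a, b, c, d and edges ab, bc, cd, so A(P₄) = ⟨a,b,c,d ∣ [a,b], [b,c], [c,d]⟩. Let F₃ be the free group on generators x, y, z. Then the homomorphism φ : F₃ → A(P₄) defined by x ↦ a, y ↦ bc, z ↦ d is injective. -/

import Mathlib

open scoped commutatorElement

/-- The defining relators of the right-angled Artin group on a simple graph `G`:
the commutators of the generators corresponding to adjacent vertices. -/
def raagRels {V : Type*} (G : SimpleGraph V) : Set (FreeGroup V) :=
  {r | ∃ u v : V, G.Adj u v ∧ r = ⁅FreeGroup.of u, FreeGroup.of v⁆}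

/-- The right-angled Artin group on a simple graph `G`. -/
abbrev RAAG {V : Type*} (G : SimpleGraph V) : Type _ := PresentedGroup (raagRels G)

/-- The generator of the right-angled Artin group corresponding to a vertex. -/
def gen {V : Type*} (G : SimpleGraph V) (v : V) : RAAG G := PresentedGroup.of v

/-- Vertices of the path P₄. -/
inductive VP : Type | a | b | c | d
deriving DecidableEq

/-- The path graph P₄ with edges ab, bc, cd. -/
def P4 : SimpleGraph VP := SimpleGraph.fromRel (fun u v => (u, v) ∈
  ([(.a,.b),(.b,.c),(.c,.d)] : List (VP × VP)))

namespace F3Aux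
open FreeGroup HNNExtension List

/- ## Reduced letter lists -/
section RedL
variable {α β : Type*}

def RedL (L : List (α × Bool)) : Prop :=
  L.Chain' (fun a b => ¬(a.1 = b.1 ∧ a.2 = !b.2))

theorem redL_map (f : α → β) (p : α → Prop)
    (hinj : ∀ a b, p a → p b → f a = f b → a = b) :
    ∀ L : List (α × Bool), (∀ x ∈ L, p x.1) → RedL L →
      RedL (L.map (fun l => (f l.1, l.2)))
  | [] => fun _ _ => List.isChain_nil
  | [a] => fun _ _ => List.isChain_singleton _
  | a :: b :: L => fun hp h => by
    have hr := List.isChain_cons_cons.1 h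
    refine List.isChain_cons_cons.2 ⟨?_, redL_map f p hinj (b :: L)
      (fun x hx => hp x (List.mem_cons_of_mem a hx)) hr.2⟩
    rintro ⟨h1, h2⟩
    exact hr.1 ⟨hinj _ _ (hp a (by simp)) (hp b (by simp)) h1, h2⟩

variable [DecidableEq α]

theorem redL_reduce (L : List (α × Bool)) : RedL (FreeGroup.reduce L) := by
  induction L with
  | nil => exact List.isChain_nil
  | cons a L ih =>
    rw [FreeGroup.reduce.cons]
    rcases h : FreeGroup.reduce L with _ | ⟨b, tl⟩
    · exact List.isChain_singleton _
    · rw [h] at ih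
      dsimp only
      split_ifs with hc
      · exact (List.isChain_cons.1 ih).2
      · exact List.isChain_cons_cons.2 ⟨hc, ih⟩

theorem reduce_eq_self_of_redL {L : List (α × Bool)} (h : RedL L) :
    FreeGroup.reduce L = L := by
  induction L with
  | nil => rfl
  | cons a L ih =>
    have hL : RedL L := (List.isChain_cons.1 h).2
    rw [FreeGroup.reduce.cons, ih hL]
    cases L with
    | nil => rfl
    | cons b tl =>
      dsimp only
      rw [if_neg]
      exact (List.isChain_cons_cons.1 h).1

theorem redL_toWord (w : FreeGroup α) : RedL w.toWord := by
  rw [← FreeGroup.reduce_toWord]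
  exact redL_reduce _

theorem eq_nil_of_redL_of_mk_eq_one {L : List (α × Bool)} (h : RedL L)
    (h1 : FreeGroup.mk L = 1) : L = [] := by
  have := congr_arg FreeGroup.toWord h1
  rwa [FreeGroup.toWord_mk, reduce_eq_self_of_redL h, FreeGroup.toWord_one] at this

end RedL

/- ## The HNN extension target -/

abbrev Hb : Type := FreeGroup Bool × Multiplicative ℤ

def cg : Hb := (FreeGroup.of true, 1)

def Asub : Subgroup Hb := Subgroup.zpowers cg

abbrev HN : Type := HNNExtension Hb Asub Asub (MulEquiv.refl Asub)

def ηg (b : Bool) : Hb := if b then (FreeGroup.of true, Multiplicative.ofAdd 1)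
  else (FreeGroup.of false, 1)

def μ2 : FreeGroup Bool →* Hb := FreeGroup.lift ηg

theorem μ2_fst (v : FreeGroup Bool) : (μ2 v).1 = v := by
  have : (MonoidHom.fst _ _).comp μ2 = MonoidHom.id (FreeGroup Bool) := by
    apply FreeGroup.ext_hom
    intro b
    cases b <;> simp [μ2, ηg]
  exact congrFun (congrArg (fun f => f.toFun) this) v

theorem μ2_mem_Asub {v : FreeGroup Bool} (h : μ2 v ∈ Asub) : v = 1 := by
  rcases Subgroup.mem_zpowers_iff.1 h with ⟨k, hk⟩
  have hcg : cg ^ k = ((FreeGroup.of true : FreeGroup Bool) ^ k, 1) := by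
    simp [cg, Prod.pow_def]
  rw [hcg] at hk
  have h2 : (μ2 v).2 = 1 := by rw [← hk]
  have h1 : v = (FreeGroup.of true : FreeGroup Bool) ^ k := by
    rw [← μ2_fst v, ← hk]
  have : (μ2 ((FreeGroup.of true : FreeGroup Bool) ^ k)).2 = Multiplicative.ofAdd k := by
    rw [map_zpow]
    simp [μ2, ηg, Prod.pow_def, ← ofAdd_zsmul]
  rw [← h1, h2] at this
  have hk0 : k = 0 := by
    have := this.symm
    rwa [← ofAdd_zero, Multiplicative.ofAdd.apply_eq_iff_eq] at this
  rw [h1, hk0, zpow_zero]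

theorem μ2_eq_one {v : FreeGroup Bool} (h : μ2 v = 1) : v = 1 := by
  have := μ2_fst v
  rw [h] at this
  exact this.symm

/- ## The homomorphism ψ : F₃ → HN -/

noncomputable def ψ : FreeGroup (Fin 3) →* HN :=
  FreeGroup.lift ![HNNExtension.of (ηg false), HNNExtension.of (ηg true), HNNExtension.t]

theorem ψ_of0 : ψ (FreeGroup.of 0) = HNNExtension.of (ηg false) := by
  simp [ψ]
theorem ψ_of1 : ψ (FreeGroup.of 1) = HNNExtension.of (ηg true) := by
  simp [ψ]
theorem ψ_of2 : ψ (FreeGroup.of 2) = HNNExtension.t := by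
  simp [ψ]

def unitOf (b : Bool) : ℤˣ := if b then 1 else -1

def trB (l : Fin 3 × Bool) : Bool × Bool := ((l.1 == 1), l.2)

def hlet (l : Fin 3 × Bool) : Hb := μ2 (FreeGroup.mk [trB l])

def st (l : Fin 3 × Bool) (p : Hb × List (ℤˣ × Hb)) : Hb × List (ℤˣ × Hb) :=
  if l.1 = 2 then (1, (unitOf l.2, p.1) :: p.2) else (hlet l * p.1, p.2)

def mkw (L : List (Fin 3 × Bool)) : Hb × List (ℤˣ × Hb) := L.foldr st (1, [])

noncomputable def lprod (L : List (ℤˣ × Hb)) : HN :=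
  (L.map fun x => HNNExtension.t ^ (x.1 : ℤ) * HNNExtension.of x.2).prod

theorem ψ_single (l : Fin 3 × Bool) :
    ψ (FreeGroup.mk [l]) = if h : l.1 = 2 then HNNExtension.t ^ ((unitOf l.2 : ℤˣ) : ℤ)
      else HNNExtension.of (hlet l) := by
  obtain ⟨i, b⟩ := l
  have hmkt : ∀ j : Fin 3, FreeGroup.mk [(j, true)] = FreeGroup.of j := fun _ => rfl
  have hmkf : ∀ j : Fin 3, FreeGroup.mk [(j, false)] = (FreeGroup.of j)⁻¹ := by
    intro j; rw [FreeGroup.of]; rfl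
  fin_cases i <;> cases b <;>
    simp [hmkt, hmkf, ψ_of0, ψ_of1, ψ_of2, unitOf, hlet, trB, μ2, ηg] <;>
    rfl

theorem prod_mkw : ∀ L : List (Fin 3 × Bool),
    HNNExtension.of (mkw L).1 * lprod (mkw L).2 = ψ (FreeGroup.mk L)
  | [] => by
    rw [← FreeGroup.one_eq_mk, _root_.map_one]
    simp [mkw, lprod]
  | l :: L => by
    have key : FreeGroup.mk (l :: L) = FreeGroup.mk [l] * FreeGroup.mk L := by
      rw [FreeGroup.mul_mk]; rfl
    rw [key, _root_.map_mul, ← prod_mkw L, ψ_single l]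
    show HNNExtension.of (st l (mkw L)).1 * lprod (st l (mkw L)).2 = _
    by_cases h : l.1 = 2
    · rw [st, if_pos h, dif_pos h]
      simp only [lprod, List.map_cons, List.prod_cons, _root_.map_one, one_mul, ← mul_assoc]
    · rw [st, if_neg h, dif_neg h]
      simp only [_root_.map_mul, mul_assoc]

def pQ : Fin 3 × Bool → Bool := fun l => !(l.1 == 2)

def Rel (a b : ℤˣ × Hb) : Prop := a.2 ∈ toSubgroup Asub Asub a.1 → a.1 = b.1

theorem toSubgroup_eq (u : ℤˣ) : toSubgroup Asub Asub u = Asub := by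
  rcases Int.units_eq_one_or u with rfl | rfl <;> simp

theorem red_pre (L : List (Fin 3 × Bool)) (h : RedL L) :
    RedL ((L.takeWhile pQ).map trB) := by
  have := redL_map (fun i : Fin 3 => (i == 1)) (fun i => i ≠ 2)
    (by decide) (L.takeWhile pQ)
    (fun x hx => by
      have := List.mem_takeWhile_imp hx
      simpa [pQ] using this)
    (h.prefix (L.takeWhile_prefix _))
  exact this

theorem struct : ∀ L : List (Fin 3 × Bool), RedL L →
    (mkw L).1 = μ2 (FreeGroup.mk ((L.takeWhile pQ).map trB)) ∧
    ((mkw L).2 = [] ↔ L.dropWhile pQ = []) ∧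
    (∀ b ∈ (mkw L).2.head?, ∃ s r', L.dropWhile pQ = ((2 : Fin 3), s) :: r' ∧ b.1 = unitOf s) ∧
    List.Chain' Rel (mkw L).2
  | [] => fun _ => by
    refine ⟨?_, by simp [mkw], by simp [mkw], by exact List.isChain_nil⟩
    rw [List.takeWhile_nil, List.map_nil, ← FreeGroup.one_eq_mk, _root_.map_one]
    rfl
  | l :: L => fun h => by
    have hR : RedL L := (List.isChain_cons.1 h).2
    obtain ⟨IH1, IH2, IH3, IH4⟩ := struct L hR
    by_cases hz : l.1 = 2
    · have hpQ : pQ l = false := by simp [pQ, hz]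
      have hmk : mkw (l :: L) = (1, (unitOf l.2, (mkw L).1) :: (mkw L).2) := by
        show st l (mkw L) = _
        rw [st, if_pos hz]
      have htw : (l :: L).takeWhile pQ = [] := by
        rw [List.takeWhile_cons_of_neg (by simp [hpQ])]
      have hdw : (l :: L).dropWhile pQ = l :: L := by
        rw [List.dropWhile_cons_of_neg (by simp [hpQ])]
      refine ⟨?_, ?_, ?_, ?_⟩
      · rw [hmk, htw, List.map_nil, ← FreeGroup.one_eq_mk, _root_.map_one]
      · rw [hmk, hdw]; simp
      · intro b hb
        rw [hmk] at hb
        simp only [List.head?_cons, Option.mem_some_iff] at hb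
        refine ⟨l.2, L, by rw [hdw, ← hz], by rw [← hb]⟩
      · rw [hmk]
        refine List.isChain_cons.2 ⟨?_, IH4⟩
        intro b hb hmem
        rw [toSubgroup_eq] at hmem
        rw [IH1] at hmem
        have h0 : FreeGroup.mk ((L.takeWhile pQ).map trB) = 1 := μ2_mem_Asub hmem
        have h1 : (L.takeWhile pQ).map trB = [] :=
          eq_nil_of_redL_of_mk_eq_one (red_pre L hR) h0
        have h2 : L.takeWhile pQ = [] := List.map_eq_nil_iff.1 h1
        have h3 : L.dropWhile pQ = L := by
          have := List.takeWhile_append_dropWhile (p := pQ) (l := L)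
          rwa [h2, List.nil_append] at this
        obtain ⟨s, r', hLr, hbs⟩ := IH3 b hb
        rw [h3] at hLr
        have hhead := (List.isChain_cons_cons.1 (hLr ▸ h)).1
        have hls : l.2 = s := by
          rcases Bool.eq_false_or_eq_true s with rfl | rfl <;>
            rcases Bool.eq_false_or_eq_true l.2 with h4 | h4 <;>
              simp_all
        rw [hbs, hls]
    · have hpQ : pQ l = true := by simp [pQ, hz]
      have hmk : mkw (l :: L) = (hlet l * (mkw L).1, (mkw L).2) := by
        show st l (mkw L) = _
        rw [st, if_neg hz]
      have htw : (l :: L).takeWhile pQ = l :: L.takeWhile pQ :=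
        List.takeWhile_cons_of_pos hpQ
      have hdw : (l :: L).dropWhile pQ = L.dropWhile pQ :=
        List.dropWhile_cons_of_pos hpQ
      refine ⟨?_, by rw [hmk, hdw]; exact IH2, ?_, by rw [hmk]; exact IH4⟩
      · rw [hmk, htw, List.map_cons]
        have : FreeGroup.mk (trB l :: (L.takeWhile pQ).map trB) =
            FreeGroup.mk [trB l] * FreeGroup.mk ((L.takeWhile pQ).map trB) := by
          rw [FreeGroup.mul_mk]; rfl
        rw [this, _root_.map_mul, ← IH1, hlet]
      · intro b hb
        rw [hmk] at hb
        rw [hdw]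
        exact IH3 b hb

theorem ψ_injective : Function.Injective ψ := by
  rw [injective_iff_map_eq_one]
  intro w hw
  set L := w.toWord with hLdef
  have hred : RedL L := redL_toWord w
  obtain ⟨S1, S2, S3, S4⟩ := struct L hred
  have hprod : HNNExtension.of (mkw L).1 * lprod (mkw L).2 = 1 := by
    rw [prod_mkw, hLdef, FreeGroup.mk_toWord]
    exact hw
  let R : HNNExtension.NormalWord.ReducedWord Hb Asub Asub :=
    ⟨(mkw L).1, (mkw L).2, S4⟩
  have hRprod : R.prod (MulEquiv.refl Asub) = 1 := hprod
  have hnil : (mkw L).2 = [] :=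
    HNNExtension.ReducedWord.toList_eq_nil_of_mem_of_range (MulEquiv.refl Asub) R
      (by rw [hRprod]; exact one_mem _)
  have hdw : L.dropWhile pQ = [] := S2.1 hnil
  have htw : L.takeWhile pQ = L := by
    have := List.takeWhile_append_dropWhile (p := pQ) (l := L)
    rwa [hdw, List.append_nil] at this
  have h1 : (HNNExtension.of (mkw L).1 : HN) = 1 := by
    rw [hnil] at hprod
    simpa [lprod] using hprod
  have h2 : (mkw L).1 = 1 := by
    rw [← _root_.map_one (HNNExtension.of (G := Hb) (A := Asub) (B := Asub)
      (φ := MulEquiv.refl Asub))] at h1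
    exact HNNExtension.of_injective (MulEquiv.refl Asub) h1
  rw [S1, htw] at h2
  have h3 : L.map trB = [] :=
    eq_nil_of_redL_of_mk_eq_one (by rw [← htw]; exact red_pre L hred) (μ2_eq_one h2)
  have h4 : L = [] := List.map_eq_nil_iff.1 h3
  rw [← FreeGroup.mk_toWord (x := w), ← hLdef, h4, ← FreeGroup.one_eq_mk]

/- ## From the RAAG to the HNN extension -/

noncomputable def fV : VP → HN := fun v => match v with
  | .a => HNNExtension.of (ηg false)
  | .b => HNNExtension.of ((1, Multiplicative.ofAdd 1) : Hb)
  | .c => HNNExtension.of ((FreeGroup.of true, 1) : Hb)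
  | .d => HNNExtension.t

theorem comm_ab : Commute (fV .a) (fV .b) := by
  have h : Commute ((FreeGroup.of false, 1) : Hb) (1, Multiplicative.ofAdd 1) := by
    simp [Commute, SemiconjBy, Prod.mul_def]
  exact h.map (HNNExtension.of (A := Asub) (B := Asub) (φ := MulEquiv.refl Asub))

theorem comm_bc : Commute (fV .b) (fV .c) := by
  have h : Commute ((1, Multiplicative.ofAdd 1) : Hb) (FreeGroup.of true, 1) := by
    simp [Commute, SemiconjBy, Prod.mul_def]
  exact h.map (HNNExtension.of (A := Asub) (B := Asub) (φ := MulEquiv.refl Asub))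

theorem comm_cd : Commute (fV .c) (fV .d) := by
  have h := HNNExtension.t_mul_of (φ := MulEquiv.refl Asub)
    ⟨cg, Subgroup.mem_zpowers cg⟩
  simp only [MulEquiv.refl_apply] at h
  show HNNExtension.of ((FreeGroup.of true, 1) : Hb) * HNNExtension.t
      = HNNExtension.t * HNNExtension.of ((FreeGroup.of true, 1) : Hb)
  exact h.symm

theorem hrels : ∀ r ∈ raagRels P4, FreeGroup.lift fV r = 1 := by
  rintro r ⟨u, v, hadj, rfl⟩
  rw [map_commutatorElement, commutatorElement_eq_one_iff_commute]
  simp only [FreeGroup.lift_apply_of]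
  simp only [P4, SimpleGraph.fromRel_adj] at hadj
  rcases hadj with ⟨hne, h | h⟩ <;>
    simp only [List.mem_cons, List.not_mem_nil, or_false, Prod.mk.injEq] at h <;>
    rcases h with ⟨rfl, rfl⟩ | ⟨rfl, rfl⟩ | ⟨rfl, rfl⟩
  · exact comm_ab
  · exact comm_bc
  · exact comm_cd
  · exact comm_ab.symm
  · exact comm_bc.symm
  · exact comm_cd.symm

noncomputable def Φ : RAAG P4 →* HN := PresentedGroup.toGroup hrels

theorem hcomp : Φ.comp (FreeGroup.lift ![gen P4 VP.a, gen P4 VP.b * gen P4 VP.c, gen P4 VP.d] :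
    FreeGroup (Fin 3) →* RAAG P4) = ψ := by
  apply FreeGroup.ext_hom
  intro i
  fin_cases i <;>
    simp only [MonoidHom.coe_comp, Function.comp_apply, FreeGroup.lift_apply_of, ψ,
      Matrix.cons_val_zero, Matrix.cons_val_one, Matrix.head_cons, Matrix.cons_val_succ,
      Fin.mk_one, Fin.isValue, gen, _root_.map_mul, Φ, PresentedGroup.toGroup.of, fV]
  all_goals
    first
    | rfl
    | (rw [← _root_.map_mul]
       congr 1 <;> simp [ηg, Prod.mul_def])

end F3Aux

/-- The homomorphism `φ : F₃ → A(P₄)` defined by `x ↦ a`, `y ↦ bc`, `z ↦ d` is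
injective. -/
theorem F3_embeds_in_raag_P4 :
    Function.Injective
      (FreeGroup.lift ![gen P4 VP.a, gen P4 VP.b * gen P4 VP.c, gen P4 VP.d] :
        FreeGroup (Fin 3) →* RAAG P4) := by
  have h : Function.Injective (⇑F3Aux.Φ ∘
      ⇑(FreeGroup.lift ![gen P4 VP.a, gen P4 VP.b * gen P4 VP.c, gen P4 VP.d] :
        FreeGroup (Fin 3) →* RAAG P4)) := by
    rw [← MonoidHom.coe_comp, F3Aux.hcomp]
    exact F3Aux.ψ_injective
  exact h.of_comp
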